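/- If M is a sequence of real numbers such that d_DF(M, A^a) ≤ 1 and d_DF(M, B^b) ≤ 1, where A^a = ⟨1,(−3,1)^a⟩ and B^b = ⟨−1,(3,−1)^b⟩, then M contains exactly a maximal runs of values in [−4,−2] and exactly b maximal runs of values in [2,4], and these runs are disjoint. -/

import Mathlib

open Set

/-- One step of a traversal: increment one or both indices by 1. -/
def FrStep (p q : ℕ × ℕ) : Prop :=
  (q.1 = p.1 + 1 ∧ q.2 = p.2) ∨ (q.1 = p.1 ∧ q.2 = p.2 + 1) ∨ (q.1 = p.1 + 1 ∧ q.2 = p.2 + 1)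

/-- `T` is a traversal of two sequences of lengths `m` and `m'` (0-indexed):
it starts at `(0,0)`, ends at `(m-1, m'-1)`, and each step increments one or both indices. -/
def IsTraversal (m m' : ℕ) (T : List (ℕ × ℕ)) : Prop :=
  T ≠ [] ∧ T.head? = some (0, 0) ∧ T.getLast? = some (m - 1, m' - 1) ∧
    T.Chain' FrStep

/-- The discrete Fréchet distance between two finite point sequences:
the least `r` such that some traversal keeps all paired points within distance `r`. -/
noncomputable def dDF {α : Type*} [PseudoMetricSpace α] [Inhabited α]
    (P Q : List α) : ℝ :=
  sInf { r : ℝ | ∃ T : List (ℕ × ℕ), IsTraversal P.length Q.length T ∧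
    ∀ p ∈ T, dist (P.getD p.1 default) (Q.getD p.2 default) ≤ r }

/-- The two-letter alphabet `{A, B}`. -/
inductive AB : Type
  | A : AB
  | B : AB
deriving DecidableEq

/-- The sequence `⟨1, (−3, 1)^a⟩` with `a` occurrences of `−3`. -/
def Aseq (a : ℕ) : List ℝ := 1 :: (List.replicate a [(-3 : ℝ), 1]).flatten

/-- The sequence `⟨−1, (3, −1)^b⟩` with `b` occurrences of `3`. -/
def Bseq (b : ℕ) : List ℝ := -1 :: (List.replicate b [(3 : ℝ), -1]).flatten

/-- The middle-curve sequence representing a string `S` over `{A, B}`: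
each character maps to the pair `0, −2` (for `A`) or `0, 2` (for `B`),
and a final `0` is appended. -/
def MSeq (S : List AB) : List ℝ :=
  (S.map (fun c => [(0 : ℝ), match c with | AB.A => -2 | AB.B => 2])).flatten ++ [0]

/-- componentwise order on pairs, as a relation -/
def Rle (p q : ℕ × ℕ) : Prop := p.1 ≤ q.1 ∧ p.2 ≤ q.2

instance : IsTrans (ℕ × ℕ) Rle :=
  ⟨fun _ _ _ h1 h2 => ⟨le_trans h1.1 h2.1, le_trans h1.2 h2.2⟩⟩

lemma FrStep.rle {p q : ℕ × ℕ} (h : FrStep p q) : Rle p q := by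
  rcases h with ⟨h1, h2⟩ | ⟨h1, h2⟩ | ⟨h1, h2⟩ <;> exact ⟨by omega, by omega⟩

lemma mem_of_getLast?_eq {α : Type*} {l : List α} {a : α} (h : l.getLast? = some a) : a ∈ l := by
  have := List.mem_getLast?_eq_getLast (l := l) (x := a) (by rw [h]; rfl)
  obtain ⟨h1, rfl⟩ := this
  exact List.getLast_mem h1

/-- along a chain, all elements are componentwise ≤ the last one -/
lemma chain_last_bound : ∀ (T : List (ℕ × ℕ)), T.Chain' FrStep →
    ∀ x, T.getLast? = some x → ∀ p ∈ T, p.1 ≤ x.1 ∧ p.2 ≤ x.2 := by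
  intro T
  induction T with
  | nil => intro _ x hx; simp at hx
  | cons a t ih =>
    intro hc x hx p hp
    cases t with
    | nil =>
      simp at hx hp
      subst hx; subst hp; exact ⟨le_refl _, le_refl _⟩
    | cons b t' =>
      simp only [List.Chain', List.isChain_cons_cons] at hc
      have hx' : (b :: t').getLast? = some x := by
        rw [← hx]; rfl
      rcases List.mem_cons.mp hp with rfl | hp'
      · have hb := ih hc.2 x hx' b List.mem_cons_self
        have hab := hc.1.rle
        exact ⟨le_trans hab.1 hb.1, le_trans hab.2 hb.2⟩
      · exact ih hc.2 x hx' p hp'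

/-- comparability of any two members of a FrStep-chain -/
lemma chain_comparable {T : List (ℕ × ℕ)} (hc : T.Chain' FrStep)
    {p q : ℕ × ℕ} (hp : p ∈ T) (hq : q ∈ T) : Rle p q ∨ Rle q p := by
  have hpw : T.Pairwise Rle := List.isChain_iff_pairwise.mp (hc.imp fun _ _ h => h.rle)
  rw [List.pairwise_iff_getElem] at hpw
  obtain ⟨s, hs, rfl⟩ := List.getElem_of_mem hp
  obtain ⟨t, ht, rfl⟩ := List.getElem_of_mem hq
  rcases lt_trichotomy s t with h | h | h
  · exact Or.inl (hpw s t hs ht h)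
  · subst h; exact Or.inl ⟨le_refl _, le_refl _⟩
  · exact Or.inr (hpw t s ht hs h)

lemma chain_mono_snd {T : List (ℕ × ℕ)} (hc : T.Chain' FrStep)
    {p q : ℕ × ℕ} (hp : p ∈ T) (hq : q ∈ T) (h : p.2 < q.2) : p.1 ≤ q.1 := by
  rcases chain_comparable hc hp hq with h' | h'
  · exact h'.1
  · obtain ⟨h1, h2⟩ := h'; omega

lemma chain_mono_fst {T : List (ℕ × ℕ)} (hc : T.Chain' FrStep)
    {p q : ℕ × ℕ} (hp : p ∈ T) (hq : q ∈ T) (h : p.1 < q.1) : p.2 ≤ q.2 := by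
  rcases chain_comparable hc hp hq with h' | h'
  · exact h'.2
  · obtain ⟨h1, h2⟩ := h'; omega

/-- coverage of intermediate values by a projection that moves by ≤ 1 each step -/
lemma chain_cover (f : ℕ × ℕ → ℕ) (hf : ∀ p q, FrStep p q → f p ≤ f q ∧ f q ≤ f p + 1) :
    ∀ (T : List (ℕ × ℕ)), T.Chain' FrStep → ∀ x₀ x₁, T.head? = some x₀ →
      T.getLast? = some x₁ → ∀ v, f x₀ ≤ v → v ≤ f x₁ → ∃ p ∈ T, f p = v := by
  intro T
  induction T with
  | nil => intro _ x₀ x₁ h; simp at h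
  | cons a t ih =>
    intro hc x₀ x₁ hh hl v hv1 hv2
    have hx₀ : a = x₀ := by simpa using hh
    subst hx₀
    cases t with
    | nil =>
      simp at hl
      subst hl
      exact ⟨a, List.mem_cons_self, by omega⟩
    | cons b t' =>
      simp only [List.Chain', List.isChain_cons_cons] at hc
      rcases eq_or_lt_of_le hv1 with h | h
      · exact ⟨a, List.mem_cons_self, h⟩
      · have hb := hf a b hc.1
        have hl' : (b :: t').getLast? = some x₁ := by rw [← hl]; rfl
        obtain ⟨p, hp, hfp⟩ := ih hc.2 b x₁ rfl hl' v (by omega) hv2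
        exact ⟨p, List.mem_cons_of_mem _ hp, hfp⟩

lemma frstep_fst : ∀ p q, FrStep p q → p.1 ≤ q.1 ∧ q.1 ≤ p.1 + 1 := by
  intro p q h; rcases h with ⟨h1, h2⟩ | ⟨h1, h2⟩ | ⟨h1, h2⟩ <;> omega

lemma frstep_snd : ∀ p q, FrStep p q → p.2 ≤ q.2 ∧ q.2 ≤ p.2 + 1 := by
  intro p q h; rcases h with ⟨h1, h2⟩ | ⟨h1, h2⟩ | ⟨h1, h2⟩ <;> omega

open Classical in
/-- run-start function: `rsf P n` is the least index `j ≤ n` such that all of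
`P j, P (j+1), ..., P (n-1)` hold (start of the current run, looking backwards). -/
noncomputable def rsf (P : ℕ → Prop) : ℕ → ℕ
  | 0 => 0
  | n + 1 => if P n then rsf P n else n + 1

lemma rsf_le (P : ℕ → Prop) : ∀ n, rsf P n ≤ n := by
  intro n
  induction n with
  | zero => simp [rsf]
  | succ k ih =>
    rw [rsf]
    split <;> omega

lemma rsf_mono (P : ℕ → Prop) {m n : ℕ} (h : m ≤ n) : rsf P m ≤ rsf P n := by
  induction n with
  | zero => have : m = 0 := by omega
            subst this; exact le_refl _
  | succ k ih =>
    rcases Nat.lt_or_ge m (k+1) with h' | h'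
    · have := ih (by omega)
      rw [rsf]
      split
      · exact this
      · exact le_trans (le_trans this (rsf_le P k)) (by omega)
    · have : m = k + 1 := by omega
      subst this; exact le_refl _

lemma rsf_gt (P : ℕ → Prop) {m n : ℕ} (hm : ¬ P m) (hmn : m < n) : m + 1 ≤ rsf P n := by
  induction n with
  | zero => omega
  | succ k ih =>
    rcases Nat.lt_or_ge m k with h' | h'
    · have := ih h'
      rw [rsf]; split
      · exact this
      · omega
    · have : m = k := by omega
      subst this
      rw [rsf, if_neg hm]

lemma rsf_start (P : ℕ → Prop) : ∀ n, P n → P (rsf P n) ∧ (rsf P n = 0 ∨ ¬ P (rsf P n - 1)) := by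
  intro n
  induction n with
  | zero => intro h; exact ⟨by simpa [rsf] using h, Or.inl rfl⟩
  | succ k ih =>
    intro h
    by_cases hk : P k
    · rw [rsf, if_pos hk]; exact ih hk
    · rw [rsf, if_neg hk]
      exact ⟨h, Or.inr (by simpa using hk)⟩

def stairF (m : ℕ) (t : ℕ) : ℕ × ℕ := if t ≤ m - 1 then (t, 0) else (m - 1, t - (m - 1))

def stairT (m g : ℕ) : List (ℕ × ℕ) := (List.range ((m - 1) + (g - 1) + 1)).map (stairF m)

lemma stair_traversal (m g : ℕ) : IsTraversal m g (stairT m g) := by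
  refine ⟨by simp [stairT], ?_, ?_, ?_⟩
  · rw [stairT, List.range_succ_eq_map]
    simp [stairF]
  · rw [stairT, List.getLast?_eq_getElem?]
    simp only [List.length_map, List.length_range]
    rw [List.getElem?_map]
    simp only [Nat.add_sub_cancel, List.getElem?_range (by omega : (m-1)+(g-1) < (m-1)+(g-1)+1)]
    simp only [Option.map_some]
    congr 1
    unfold stairF
    split <;> (ext <;> simp <;> omega)
  · rw [stairT]; simp only [List.Chain', List.isChain_map]
    rw [show (m-1)+(g-1)+1 = ((m-1)+(g-1)).succ from rfl, List.isChain_range_succ]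
    intro t ht
    unfold stairF FrStep
    split_ifs <;> simp [Prod.ext_iff] <;> omega

lemma exists_traversal (M G : List ℝ) (h : dDF M G ≤ 1) :
    ∃ T, IsTraversal M.length G.length T ∧ ∀ p ∈ T, |M.getD p.1 0 - G.getD p.2 0| ≤ 1 := by
  classical
  have hdef : (default : ℝ) = 0 := rfl
  set m := M.length with hm
  set g := G.length with hg
  set S := { r : ℝ | ∃ T : List (ℕ × ℕ), IsTraversal m g T ∧
    ∀ p ∈ T, dist (M.getD p.1 default) (G.getD p.2 default) ≤ r } with hS
  have hd : dDF M G = sInf S := rfl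
  set D : Finset ℝ := ((Finset.range (m+1)) ×ˢ (Finset.range (g+1))).image
    (fun p => |M.getD p.1 0 - G.getD p.2 0|) with hD
  have hDne : D.Nonempty :=
    ⟨|M.getD 0 0 - G.getD 0 0|, Finset.mem_image.mpr ⟨(0,0), by simp, rfl⟩⟩
  have hmemD : ∀ T : List (ℕ × ℕ), IsTraversal m g T → ∀ p ∈ T,
      |M.getD p.1 0 - G.getD p.2 0| ∈ D := by
    intro T hT p hp
    have hb := chain_last_bound T hT.2.2.2 _ hT.2.2.1 p hp
    simp only [hD]
    exact Finset.mem_image.mpr ⟨(p.1, p.2), by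
      rw [Finset.mem_product]
      constructor <;> rw [Finset.mem_range] <;> omega, rfl⟩
  have hSne : S.Nonempty := by
    refine ⟨D.max' hDne, stairT m g, stair_traversal m g, fun p hp => ?_⟩
    rw [Real.dist_eq, hdef]
    exact D.le_max' _ (hmemD _ (stair_traversal m g) p hp)
  set D' := D.filter (fun d => (1:ℝ) < d) with hD'
  set ε := if h : D'.Nonempty then D'.min' h - 1 else 1 with hε
  have hεpos : 0 < ε := by
    rw [hε]
    split
    · next hne =>
      have := (Finset.mem_filter.mp (D'.min'_mem hne)).2
      linarith
    · norm_num
  obtain ⟨r, hrS, hrlt⟩ := Real.lt_sInf_add_pos hSne hεpos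
  rw [hd] at h
  have hr1 : r < 1 + ε := by linarith
  obtain ⟨T, hT, hbr⟩ := hrS
  refine ⟨T, hT, fun p hp => ?_⟩
  by_contra hgt
  push_neg at hgt
  have hDm := hmemD T hT p hp
  have hD'm : |M.getD p.1 0 - G.getD p.2 0| ∈ D' := by
    rw [hD', Finset.mem_filter]; exact ⟨hDm, hgt⟩
  have hne' : D'.Nonempty := ⟨_, hD'm⟩
  have hεeq : ε = D'.min' hne' - 1 := by rw [hε, dif_pos hne']
  have h1 := D'.min'_le _ hD'm
  have h2 := hbr p hp
  rw [Real.dist_eq, hdef] at h2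
  linarith

open Classical in
lemma runs_eq (M G : List ℝ) (lo hi : ℝ) (spec : ℕ → Prop)
    (T : List (ℕ × ℕ)) (hT : IsTraversal M.length G.length T)
    (hb : ∀ p ∈ T, |M.getD p.1 0 - G.getD p.2 0| ≤ 1)
    (hG0 : 0 < G.length)
    (h0 : (0:ℝ) ∉ Set.Icc lo hi)
    (hsv : ∀ q < G.length, spec q → ∀ x : ℝ, |x - G.getD q 0| ≤ 1 → x ∈ Set.Icc lo hi)
    (hnv : ∀ q < G.length, ¬ spec q → ∀ x : ℝ, |x - G.getD q 0| ≤ 1 → x ∉ Set.Icc lo hi)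
    (hsep : ∀ q q', q < q' → q' < G.length → spec q → spec q' → ∃ u, q < u ∧ u < q' ∧ ¬ spec u) :
    ((Finset.range M.length).filter (fun j => M.getD j 0 ∈ Set.Icc lo hi ∧
        (j = 0 ∨ M.getD (j-1) 0 ∉ Set.Icc lo hi))).card
      = ((Finset.range G.length).filter spec).card := by
  obtain ⟨hne, hhead, hlast, hchain⟩ := hT
  set P : ℕ → Prop := fun n => M.getD n 0 ∈ Set.Icc lo hi with hP
  -- basic traversal facts
  have hbnd : ∀ p ∈ T, p.1 ≤ M.length - 1 ∧ p.2 ≤ G.length - 1 :=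
    chain_last_bound T hchain _ hlast
  have hcov1 : ∀ i < M.length, ∃ p ∈ T, p.1 = i := by
    intro i hi
    exact chain_cover Prod.fst frstep_fst T hchain _ _ hhead hlast i (by simp) (by simp; omega)
  have hcov2 : ∀ j < G.length, ∃ p ∈ T, p.2 = j := by
    intro j hj
    exact chain_cover Prod.snd frstep_snd T hchain _ _ hhead hlast j (by simp) (by simp; omega)
  have hin2 : ∀ p ∈ T, p.2 < G.length := fun p hp => by
    have := (hbnd p hp).2; omega
  have hMI : ∀ p ∈ T, spec p.2 → P p.1 :=
    fun p hp hs => hsv p.2 (hin2 p hp) hs _ (hb p hp)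
  have hMN : ∀ p ∈ T, ¬ spec p.2 → ¬ P p.1 :=
    fun p hp hs => hnv p.2 (hin2 p hp) hs _ (hb p hp)
  have hMlen : ∀ p ∈ T, P p.1 → p.1 < M.length := by
    intro p hp hPp
    rcases Nat.eq_zero_or_pos M.length with h | h
    · exfalso
      have : p.1 = 0 := by have := (hbnd p hp).1; omega
      rw [hP] at hPp
      rw [this] at hPp
      have : M.getD 0 0 = 0 := by
        cases M with
        | nil => rfl
        | cons x t => simp at h
      rw [this] at hPp
      exact h0 hPp
    · have := (hbnd p hp).1; omega
  -- choice functions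
  have hex2 : ∀ k : ℕ, ∃ p : ℕ × ℕ, k < G.length → p ∈ T ∧ p.2 = k := by
    intro k
    by_cases h : k < G.length
    · obtain ⟨p, hp1, hp2⟩ := hcov2 k h
      exact ⟨p, fun _ => ⟨hp1, hp2⟩⟩
    · exact ⟨(0,0), fun h' => absurd h' h⟩
  have hex1 : ∀ j : ℕ, ∃ p : ℕ × ℕ, j < M.length → p ∈ T ∧ p.1 = j := by
    intro j
    by_cases h : j < M.length
    · obtain ⟨p, hp1, hp2⟩ := hcov1 j h
      exact ⟨p, fun _ => ⟨hp1, hp2⟩⟩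
    · exact ⟨(0,0), fun h' => absurd h' h⟩
  set pk : ℕ → ℕ × ℕ := fun k => Classical.choose (hex2 k) with hpkdef
  have hpk : ∀ k, k < G.length → pk k ∈ T ∧ (pk k).2 = k :=
    fun k => Classical.choose_spec (hex2 k)
  set pj : ℕ → ℕ × ℕ := fun j => Classical.choose (hex1 j) with hpjdef
  have hpj : ∀ j, j < M.length → pj j ∈ T ∧ (pj j).1 = j :=
    fun j => Classical.choose_spec (hex1 j)
  set S1 := (Finset.range M.length).filter
    (fun j => M.getD j 0 ∈ Set.Icc lo hi ∧ (j = 0 ∨ M.getD (j-1) 0 ∉ Set.Icc lo hi)) with hS1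
  set S2 := (Finset.range G.length).filter spec with hS2
  have hmemS2 : ∀ k ∈ S2, k < G.length ∧ spec k := by
    intro k hk
    rw [hS2, Finset.mem_filter, Finset.mem_range] at hk
    exact hk
  have hmemS1 : ∀ j ∈ S1, j < M.length ∧ P j ∧ (j = 0 ∨ ¬ P (j-1)) := by
    intro j hj
    rw [hS1, Finset.mem_filter, Finset.mem_range] at hj
    exact ⟨hj.1, hj.2.1, hj.2.2⟩
  -- injection S2 → S1 via k ↦ rsf P (pk k).1
  have card21 : S2.card ≤ S1.card := by
    apply Finset.card_le_card_of_injOn (fun k => rsf P (pk k).1)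
    · intro k hk
      obtain ⟨hklen, hks⟩ := hmemS2 k hk
      obtain ⟨hpkT, hpk2⟩ := hpk k hklen
      have hPk : P (pk k).1 := hMI _ hpkT (by rw [hpk2]; exact hks)
      have hlen : (pk k).1 < M.length := hMlen _ hpkT hPk
      obtain ⟨hst1, hst2⟩ := rsf_start P _ hPk
      rw [Finset.mem_coe, hS1, Finset.mem_filter, Finset.mem_range]
      refine ⟨by have := rsf_le P (pk k).1; dsimp only; omega, hst1, hst2⟩
    · -- strict monotonicity gives injectivity
      have hmono : ∀ k ∈ S2, ∀ k' ∈ S2, k < k' → rsf P (pk k).1 < rsf P (pk k').1 := by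
        intro k hk k' hk' hlt
        obtain ⟨hklen, hks⟩ := hmemS2 k hk
        obtain ⟨hk'len, hk's⟩ := hmemS2 k' hk'
        obtain ⟨hpkT, hpk2⟩ := hpk k hklen
        obtain ⟨hpk'T, hpk'2⟩ := hpk k' hk'len
        obtain ⟨u, hu1, hu2, hu3⟩ := hsep k k' hlt hk'len hks hk's
        obtain ⟨p₀, hp₀T, hp₀2⟩ := hcov2 u (by omega)
        have hP₀ : ¬ P p₀.1 := hMN _ hp₀T (by rw [hp₀2]; exact hu3)
        have hPk : P (pk k).1 := hMI _ hpkT (by rw [hpk2]; exact hks)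
        have hPk' : P (pk k').1 := hMI _ hpk'T (by rw [hpk'2]; exact hk's)
        have h1 : (pk k).1 ≤ p₀.1 := chain_mono_snd hchain hpkT hp₀T (by omega)
        have h2 : p₀.1 ≤ (pk k').1 := chain_mono_snd hchain hp₀T hpk'T (by omega)
        have h3 : (pk k).1 ≠ p₀.1 := fun h => hP₀ (h ▸ hPk)
        have h4 : p₀.1 ≠ (pk k').1 := fun h => hP₀ (h ▸ hPk')
        have h5 := rsf_le P (pk k).1
        have h6 := rsf_gt P hP₀ (show p₀.1 < (pk k').1 by omega)
        omega
      intro k hk k' hk' heq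
      rcases lt_trichotomy k k' with h | h | h
      · exact absurd heq (Nat.ne_of_lt (hmono k hk k' hk' h))
      · exact h
      · exact absurd heq.symm (Nat.ne_of_lt (hmono k' hk' k hk h))
  -- injection S1 → S2 via j ↦ (pj j).2
  have card12 : S1.card ≤ S2.card := by
    apply Finset.card_le_card_of_injOn (fun j => (pj j).2)
    · intro j hj
      obtain ⟨hjlen, hPj, _⟩ := hmemS1 j hj
      obtain ⟨hpjT, hpj1⟩ := hpj j hjlen
      rw [Finset.mem_coe, hS2, Finset.mem_filter, Finset.mem_range]
      refine ⟨hin2 _ hpjT, ?_⟩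
      by_contra hns
      exact hMN _ hpjT hns (by rw [hpj1]; exact hPj)
    · have hmono : ∀ j ∈ S1, ∀ j' ∈ S1, j < j' → (pj j).2 < (pj j').2 := by
        intro j hj j' hj' hlt
        obtain ⟨hjlen, hPj, _⟩ := hmemS1 j hj
        obtain ⟨hj'len, hPj', hst'⟩ := hmemS1 j' hj'
        obtain ⟨hpjT, hpj1⟩ := hpj j hjlen
        obtain ⟨hpj'T, hpj'1⟩ := hpj j' hj'len
        have hj'0 : j' ≠ 0 := by omega
        have hPj'1 : ¬ P (j' - 1) := by
          rcases hst' with h | h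
          · exact absurd h hj'0
          · exact h
        have hjne : j ≠ j' - 1 := fun h => hPj'1 (h ▸ hPj)
        obtain ⟨hp₀T, hp₀1⟩ := hpj (j' - 1) (by omega)
        set p₀ := pj (j' - 1) with hp₀def
        have hsj : spec (pj j).2 := by
          by_contra hns
          exact hMN _ hpjT hns (by rw [hpj1]; exact hPj)
        have hsj' : spec (pj j').2 := by
          by_contra hns
          exact hMN _ hpj'T hns (by rw [hpj'1]; exact hPj')
        have hs₀ : ¬ spec p₀.2 := by
          intro hs
          apply hPj'1
          have := hMI _ hp₀T hs
          rwa [hp₀1] at this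
        have h1 : (pj j).2 ≤ p₀.2 := chain_mono_fst hchain hpjT hp₀T (by omega)
        have h2 : p₀.2 ≤ (pj j').2 := chain_mono_fst hchain hp₀T hpj'T (by omega)
        have h3 : (pj j).2 ≠ p₀.2 := fun h => hs₀ (h ▸ hsj)
        have h4 : p₀.2 ≠ (pj j').2 := fun h => (h ▸ hs₀) hsj'
        omega
      intro j hj j' hj' heq
      rcases lt_trichotomy j j' with h | h | h
      · exact absurd heq (Nat.ne_of_lt (hmono j hj j' hj' h))
      · exact h
      · exact absurd heq.symm (Nat.ne_of_lt (hmono j' hj' j hj h))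
  omega

lemma Aseq_length (a : ℕ) : (Aseq a).length = 2*a+1 := by
  induction a with
  | zero => rfl
  | succ k ih =>
    have : Aseq (k+1) = 1 :: (-3:ℝ) :: 1 :: (List.replicate k [(-3:ℝ), 1]).flatten := by
      simp [Aseq, List.replicate_succ]
    rw [this]
    simp only [List.length_cons]
    have : Aseq k = 1 :: (List.replicate k [(-3:ℝ), 1]).flatten := rfl
    rw [this] at ih
    simp only [List.length_cons] at ih
    omega

lemma Aseq_cons (k : ℕ) : Aseq (k+1) = 1 :: (-3:ℝ) :: Aseq k := by
  simp [Aseq, List.replicate_succ]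

lemma Aseq_getD (a : ℕ) : ∀ p, p < 2*a+1 →
    (Aseq a).getD p 0 = if p % 2 = 0 then 1 else -3 := by
  induction a with
  | zero =>
    intro p hp
    have : p = 0 := by omega
    subst this
    rfl
  | succ k ih =>
    intro p hp
    match p with
    | 0 => rw [Aseq_cons]; rfl
    | 1 => rw [Aseq_cons]; rfl
    | (n+2) =>
      rw [Aseq_cons]
      simp only [List.getD_cons_succ]
      rw [ih n (by omega)]
      have h2 : (n+2) % 2 = n % 2 := by omega
      rw [h2]

lemma Bseq_length (b : ℕ) : (Bseq b).length = 2*b+1 := by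
  induction b with
  | zero => rfl
  | succ k ih =>
    have : Bseq (k+1) = -1 :: (3:ℝ) :: -1 :: (List.replicate k [(3:ℝ), -1]).flatten := by
      simp [Bseq, List.replicate_succ]
    rw [this]
    simp only [List.length_cons]
    have : Bseq k = -1 :: (List.replicate k [(3:ℝ), -1]).flatten := rfl
    rw [this] at ih
    simp only [List.length_cons] at ih
    omega

lemma Bseq_cons (k : ℕ) : Bseq (k+1) = -1 :: (3:ℝ) :: Bseq k := by
  simp [Bseq, List.replicate_succ]

lemma Bseq_getD (b : ℕ) : ∀ p, p < 2*b+1 →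
    (Bseq b).getD p 0 = if p % 2 = 0 then -1 else 3 := by
  induction b with
  | zero =>
    intro p hp
    have : p = 0 := by omega
    subst this
    rfl
  | succ k ih =>
    intro p hp
    match p with
    | 0 => rw [Bseq_cons]; rfl
    | 1 => rw [Bseq_cons]; rfl
    | (n+2) =>
      rw [Bseq_cons]
      simp only [List.getD_cons_succ]
      rw [ih n (by omega)]
      have h2 : (n+2) % 2 = n % 2 := by omega
      rw [h2]

open Classical in
lemma card_odds (a : ℕ) : ((Finset.range (2*a+1)).filter (fun p => p % 2 = 1)).card = a := by
  induction a with
  | zero =>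
    rw [show 2*0+1 = 1 from rfl, Finset.range_one]
    rw [Finset.filter_singleton, if_neg (by omega)]
    rfl
  | succ k ih =>
    rw [show 2*(k+1)+1 = (2*k+1)+1+1 by ring, Finset.range_add_one, Finset.range_add_one]
    rw [Finset.filter_insert, Finset.filter_insert]
    rw [if_neg (by omega), if_pos (by omega)]
    rw [Finset.card_insert_of_notMem (by
      intro hmem
      have := Finset.mem_of_mem_filter _ hmem
      rw [Finset.mem_range] at this
      omega)]
    omega

open scoped Classical in
theorem runs_count_of_close_to_gadgets (a b : ℕ) (M : List ℝ)
    (hA : dDF M (Aseq a) ≤ 1) (hB : dDF M (Bseq b) ≤ 1) :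
    ((Finset.range M.length).filter (fun j =>
        M.getD j 0 ∈ Set.Icc (-4 : ℝ) (-2) ∧
        (j = 0 ∨ M.getD (j - 1) 0 ∉ Set.Icc (-4 : ℝ) (-2)))).card = a ∧
    ((Finset.range M.length).filter (fun j =>
        M.getD j 0 ∈ Set.Icc (2 : ℝ) 4 ∧
        (j = 0 ∨ M.getD (j - 1) 0 ∉ Set.Icc (2 : ℝ) 4))).card = b ∧
    ∀ j < M.length, ¬(M.getD j 0 ∈ Set.Icc (-4 : ℝ) (-2) ∧
        M.getD j 0 ∈ Set.Icc (2 : ℝ) 4) := by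
  obtain ⟨TA, hTA, hbA⟩ := exists_traversal M (Aseq a) hA
  obtain ⟨TB, hTB, hbB⟩ := exists_traversal M (Bseq b) hB
  refine ⟨?_, ?_, ?_⟩
  · have h := runs_eq M (Aseq a) (-4) (-2) (fun q => q % 2 = 1) TA hTA hbA
      (by rw [Aseq_length]; omega)
      (by intro hmem; rw [Set.mem_Icc] at hmem; linarith [hmem.1, hmem.2])
      (by
        intro q hq hsq x hx
        rw [Aseq_length] at hq
        rw [Aseq_getD a q hq, if_neg (by omega)] at hx
        rw [abs_le] at hx
        rw [Set.mem_Icc]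
        constructor <;> linarith [hx.1, hx.2])
      (by
        intro q hq hsq x hx
        rw [Aseq_length] at hq
        rw [Aseq_getD a q hq, if_pos (by omega)] at hx
        rw [abs_le] at hx
        intro hmem
        rw [Set.mem_Icc] at hmem
        linarith [hx.1, hmem.2])
      (by
        intro q q' hqq' hq' hs hs'
        exact ⟨q + 1, by omega, by omega, by omega⟩)
    rw [h, Aseq_length]
    convert card_odds a using 2
    congr!
  · have h := runs_eq M (Bseq b) 2 4 (fun q => q % 2 = 1) TB hTB hbB
      (by rw [Bseq_length]; omega)
      (by intro hmem; rw [Set.mem_Icc] at hmem; linarith [hmem.1, hmem.2])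
      (by
        intro q hq hsq x hx
        rw [Bseq_length] at hq
        rw [Bseq_getD b q hq, if_neg (by omega)] at hx
        rw [abs_le] at hx
        rw [Set.mem_Icc]
        constructor <;> linarith [hx.1, hx.2])
      (by
        intro q hq hsq x hx
        rw [Bseq_length] at hq
        rw [Bseq_getD b q hq, if_pos (by omega)] at hx
        rw [abs_le] at hx
        intro hmem
        rw [Set.mem_Icc] at hmem
        linarith [hx.2, hmem.1])
      (by
        intro q q' hqq' hq' hs hs'
        exact ⟨q + 1, by omega, by omega, by omega⟩)
    rw [h, Bseq_length]
    convert card_odds b using 2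
    congr!
  · intro j hj hmem
    obtain ⟨h1, h2⟩ := hmem
    rw [Set.mem_Icc] at h1 h2
    linarith [h1.2, h2.1]
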